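/- Let K ⊆ ℝⁿ be closed, σ > 1, K_σ = {x ∉ K : ρ_K^φ(x) ≥ σ}, and for t ∈ ℝ define h_t(y) = t y + (1 − t) ξ_K^φ(y) (single-valued on K_σ). Then for every 0 < t < σ, the map h_t restricted to K_σ is a homeomorphism onto K_{σ/t}, with inverse h_{1/t} restricted to K_{σ/t}. -/

import Mathlib

open Set Filter Metric MeasureTheory Topology ENNReal

noncomputable section

abbrev Euc (n : ℕ) := EuclideanSpace ℝ (Fin n)

def IsNorm {n : ℕ} (φ : Euc n → ℝ) : Prop :=
  (∀ x, φ x = 0 ↔ x = 0) ∧ (∀ (c : ℝ) (x : Euc n), φ (c • x) = |c| * φ x) ∧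
    (∀ x y, φ (x + y) ≤ φ x + φ y)

def StrictlyConvexNorm {n : ℕ} (φ : Euc n → ℝ) : Prop :=
  IsNorm φ ∧ ∀ a b, φ (a + b) = φ a + φ b → φ b • a = φ a • b

def UniformlyConvexNorm {n : ℕ} (φ : Euc n → ℝ) : Prop :=
  IsNorm φ ∧ ∃ γ : ℝ, 0 < γ ∧ ConvexOn ℝ Set.univ (fun x => φ x - γ * ‖x‖)

def distφ {n : ℕ} (φ : Euc n → ℝ) (K : Set (Euc n)) (x : Euc n) : ℝ :=
  sInf {r | ∃ y ∈ K, r = φ (x - y)}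

def nearφ {n : ℕ} (φ : Euc n → ℝ) (K : Set (Euc n)) (x : Euc n) : Set (Euc n) :=
  {a ∈ K | φ (x - a) = distφ φ K x}

def rhoφ {n : ℕ} (φ : Euc n → ℝ) (K : Set (Euc n)) (x : Euc n) : ℝ≥0∞ :=
  sSup {r : ℝ≥0∞ | ∃ s : ℝ, ∃ a ∈ nearφ φ K x,
    r = ENNReal.ofReal s ∧ distφ φ K (a + s • (x - a)) = s * distφ φ K x}

def normalBundle {n : ℕ} (φ : Euc n → ℝ) (K : Set (Euc n)) : Set (Euc n × Euc n) :=
  {p | p.1 ∈ K ∧ φ p.2 = 1 ∧ ∃ s : ℝ, 0 < s ∧ distφ φ K (p.1 + s • p.2) = s}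

def reachφ {n : ℕ} (φ : Euc n → ℝ) (K : Set (Euc n)) (p : Euc n × Euc n) : ℝ≥0∞ :=
  sSup {r : ℝ≥0∞ | ∃ s : ℝ, 0 < s ∧ r = ENNReal.ofReal s ∧ distφ φ K (p.1 + s • p.2) = s}

def cutLocus {n : ℕ} (φ : Euc n → ℝ) (K : Set (Euc n)) : Set (Euc n) :=
  {x | ∃ p ∈ normalBundle φ K, reachφ φ K p ≠ ⊤ ∧
    x = p.1 + (reachφ φ K p).toReal • p.2}

def PtTwiceDiffAt {n : ℕ} (f : Euc n → ℝ) (x : Euc n) : Prop :=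
  ∃ (L : Euc n →L[ℝ] ℝ) (Q : Euc n →L[ℝ] Euc n →L[ℝ] ℝ),
    Tendsto (fun y => |f y - f x - L (y - x) - Q (y - x) (y - x)| / ‖y - x‖ ^ 2)
      (𝓝[≠] x) (𝓝 0)

section AuxSection

namespace Aux

variable {n : ℕ} {φ : Euc n → ℝ} (hn : IsNorm φ)

include hn

theorem phi_zero : φ 0 = 0 := (hn.1 0).2 rfl

theorem phi_nonneg (x : Euc n) : 0 ≤ φ x := by
  have h := hn.2.2 x (-x)
  have h2 : φ (-x) = φ x := by
    have := hn.2.1 (-1) x; simpa using this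
  have h0 : φ (x + -x) = 0 := by simpa using phi_zero hn
  nlinarith [h, h2, h0]

theorem phi_neg (x : Euc n) : φ (-x) = φ x := by
  have := hn.2.1 (-1) x; simpa using this

theorem phi_smul_nonneg {c : ℝ} (hc : 0 ≤ c) (x : Euc n) : φ (c • x) = c * φ x := by
  rw [hn.2.1, abs_of_nonneg hc]

theorem phi_sub_le (x y z : Euc n) : φ (x - z) ≤ φ (x - y) + φ (y - z) := by
  have := hn.2.2 (x - y) (y - z)
  simpa using this

theorem phi_eq_zero_iff (x : Euc n) : φ x = 0 ↔ x = 0 := hn.1 x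

/-- finite subadditivity -/
theorem phi_sum_le {ι : Type*} (s : Finset ι) (g : ι → Euc n) :
    φ (∑ i ∈ s, g i) ≤ ∑ i ∈ s, φ (g i) := by
  classical
  induction s using Finset.cons_induction with
  | empty => simp [phi_zero hn]
  | cons a s ha ih =>
    rw [Finset.sum_cons, Finset.sum_cons]
    calc φ (g a + ∑ i ∈ s, g i) ≤ φ (g a) + φ (∑ i ∈ s, g i) := hn.2.2 _ _
      _ ≤ φ (g a) + ∑ i ∈ s, φ (g i) := by linarith [ih]

omit hn in theorem abs_coord_le_norm (u : Euc n) (i : Fin n) : |u i| ≤ ‖u‖ := by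
  rw [EuclideanSpace.norm_eq]
  rw [← Real.sqrt_sq_eq_abs]
  apply Real.sqrt_le_sqrt
  simp only [Real.norm_eq_abs, sq_abs]
  exact Finset.single_le_sum (f := fun j => u j ^ 2) (fun j _ => sq_nonneg _) (Finset.mem_univ i)

theorem phi_upper : ∃ C : ℝ, 0 ≤ C ∧ ∀ u : Euc n, φ u ≤ C * ‖u‖ := by
  classical
  set C := ∑ i : Fin n, φ (EuclideanSpace.single i 1) with hC
  refine ⟨C, Finset.sum_nonneg fun i _ => phi_nonneg hn _, fun u => ?_⟩
  have hu : ∑ i : Fin n, u i • (EuclideanSpace.single i (1:ℝ)) = u := by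
    have := (EuclideanSpace.basisFun (Fin n) ℝ).sum_repr u
    simpa [EuclideanSpace.basisFun_apply, EuclideanSpace.basisFun_repr] using this
  calc φ u = φ (∑ i : Fin n, u i • (EuclideanSpace.single i (1:ℝ))) := by rw [hu]
    _ ≤ ∑ i : Fin n, φ (u i • EuclideanSpace.single i (1:ℝ)) := phi_sum_le hn _ _
    _ = ∑ i : Fin n, |u i| * φ (EuclideanSpace.single i (1:ℝ)) := by
        simp [hn.2.1]
    _ ≤ ∑ i : Fin n, ‖u‖ * φ (EuclideanSpace.single i (1:ℝ)) := by
        apply Finset.sum_le_sum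
        intro i _
        exact mul_le_mul_of_nonneg_right (abs_coord_le_norm (n:=n) u i) (phi_nonneg hn _)
    _ = C * ‖u‖ := by rw [← Finset.mul_sum]; ring

theorem phi_continuous : Continuous φ := by
  obtain ⟨C, hC0, hC⟩ := phi_upper hn
  have : LipschitzWith ⟨C, hC0⟩ φ := by
    apply LipschitzWith.of_dist_le_mul
    intro x y
    rw [Real.dist_eq, dist_eq_norm]
    have h1 : φ x - φ y ≤ φ (x - y) := by
      have := hn.2.2 (x - y) y; simp at this; linarith
    have h2 : φ y - φ x ≤ φ (x - y) := by
      have := hn.2.2 (y - x) x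
      have hn2 : φ (y - x) = φ (x - y) := by
        rw [← phi_neg hn (x - y)]; congr 1; abel
      simp at this; linarith
    have := hC (x - y)
    show |φ x - φ y| ≤ C * ‖x - y‖; rw [abs_le]; constructor <;> simp <;> linarith
  exact this.continuous

theorem phi_lower : ∃ c : ℝ, 0 < c ∧ ∀ u : Euc n, c * ‖u‖ ≤ φ u := by
  rcases subsingleton_or_nontrivial (Euc n) with hs | hs
  · refine ⟨1, one_pos, fun u => ?_⟩
    have : u = 0 := Subsingleton.elim u 0
    simp [this, phi_zero hn]
  · have hne : (sphere (0 : Euc n) 1).Nonempty := NormedSpace.sphere_nonempty.mpr zero_le_one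
    obtain ⟨z, hz, hmin⟩ := (isCompact_sphere (0 : Euc n) 1).exists_isMinOn hne
      (phi_continuous hn).continuousOn
    have hz1 : ‖z‖ = 1 := by simpa using hz
    have hzpos : 0 < φ z := by
      rcases (phi_nonneg hn z).lt_or_eq with h | h
      · exact h
      · exfalso
        have : z = 0 := (phi_eq_zero_iff hn z).1 h.symm
        rw [this] at hz1; simp at hz1
    refine ⟨φ z, hzpos, fun u => ?_⟩
    rcases eq_or_ne u 0 with rfl | hu
    · simp [phi_zero hn]
    · have hnu : 0 < ‖u‖ := norm_pos_iff.mpr hu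
      have hmem : (‖u‖⁻¹ • u) ∈ sphere (0 : Euc n) 1 := by
        simp [norm_smul, abs_of_pos (inv_pos.mpr hnu), inv_mul_cancel₀ hnu.ne']
      have := hmin hmem
      have heq : φ (‖u‖⁻¹ • u) = ‖u‖⁻¹ * φ u :=
        phi_smul_nonneg hn (inv_nonneg.mpr hnu.le) u
      simp only [IsMinOn, IsMinFilter] at this
      have h2 : φ z ≤ ‖u‖⁻¹ * φ u := by rw [← heq]; exact this
      calc φ z * ‖u‖ ≤ (‖u‖⁻¹ * φ u) * ‖u‖ := by nlinarith
        _ = φ u := by field_simp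

end Aux

namespace Aux

variable {n : ℕ} {φ : Euc n → ℝ} {K : Set (Euc n)} (hn : IsNorm φ)

include hn

theorem dist_bddBelow (x : Euc n) : BddBelow {r | ∃ y ∈ K, r = φ (x - y)} := by
  refine ⟨0, ?_⟩; rintro r ⟨y, _, rfl⟩; exact phi_nonneg hn _

theorem dist_nonneg' (x : Euc n) : 0 ≤ distφ φ K x := by
  rcases eq_or_ne ({r | ∃ y ∈ K, r = φ (x - y)}) ∅ with he | he
  · rw [distφ, he, Real.sInf_empty]
  · apply le_csInf (Set.nonempty_iff_ne_empty.mpr he)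
    rintro r ⟨y, _, rfl⟩; exact phi_nonneg hn _

theorem dist_le_phi {x a : Euc n} (ha : a ∈ K) : distφ φ K x ≤ φ (x - a) :=
  csInf_le (dist_bddBelow hn x) ⟨a, ha, rfl⟩

omit hn in
theorem le_dist (hne : K.Nonempty) {x : Euc n} {c : ℝ} (hc : ∀ b ∈ K, c ≤ φ (x - b)) :
    c ≤ distφ φ K x := by
  obtain ⟨b, hb⟩ := hne
  refine le_csInf ⟨φ (x - b), ⟨b, hb, rfl⟩⟩ ?_
  rintro r ⟨y, hy, rfl⟩; exact hc y hy

/-- distance is φ-Lipschitz -/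
theorem dist_lip (hne : K.Nonempty) (x z : Euc n) :
    distφ φ K x ≤ φ (x - z) + distφ φ K z := by
  have h : ∀ b ∈ K, distφ φ K x - φ (x - z) ≤ φ (z - b) := by
    intro b hb
    have := dist_le_phi hn (x := x) hb
    have h2 := phi_sub_le hn x z b
    linarith
  have := le_dist hne (x := z) (c := distφ φ K x - φ (x - z)) h
  linarith

theorem dist_continuous (hne : K.Nonempty) : Continuous (distφ φ K) := by
  obtain ⟨C, hC0, hC⟩ := phi_upper hn
  have : LipschitzWith ⟨C, hC0⟩ (distφ φ K) := by
    apply LipschitzWith.of_dist_le_mul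
    intro x y
    rw [Real.dist_eq, dist_eq_norm]
    have h1 := dist_lip hn hne x y
    have h2 := dist_lip hn hne y x
    have hee : ‖y - x‖ = ‖x - y‖ := by rw [← neg_sub, norm_neg]
    have hxy := hC (x - y)
    have hyx : φ (y - x) ≤ C * ‖x - y‖ := by rw [← hee]; exact hC (y - x)
    have : ‖y - x‖ = ‖x - y‖ := by rw [← neg_sub, norm_neg]
    show |distφ φ K x - distφ φ K y| ≤ C * ‖x - y‖
    rw [abs_le]
    constructor <;> linarith
  exact this.continuous

theorem dist_pos {x : Euc n} (hx : x ∉ K) {a : Euc n} (ha : a ∈ nearφ φ K x) :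
    0 < distφ φ K x := by
  rcases (dist_nonneg' hn (K := K) x).lt_or_eq with h | h
  · exact h
  · exfalso
    have hphi : φ (x - a) = 0 := by rw [ha.2, ← h]
    have : x - a = 0 := (phi_eq_zero_iff hn _).1 hphi
    have : x = a := by rwa [sub_eq_zero] at this
    exact hx (this ▸ ha.1)

/-- segment lemma: points between a and the far point have a as a nearest point -/
theorem seg_lemma {x a : Euc n} (ha : a ∈ nearφ φ K x) {S s : ℝ}
    (hS : distφ φ K (a + S • (x - a)) = S * distφ φ K x)
    (hs0 : 0 ≤ s) (hsS : s ≤ S) :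
    distφ φ K (a + s • (x - a)) = s * distφ φ K x ∧ a ∈ nearφ φ K (a + s • (x - a)) := by
  set d := distφ φ K x with hd
  set y := a + s • (x - a) with hy
  set z := a + S • (x - a) with hz
  have hKne : K.Nonempty := ⟨a, ha.1⟩
  have hya : y - a = s • (x - a) := by rw [hy]; abel
  have hphiya : φ (y - a) = s * d := by
    rw [hya, phi_smul_nonneg hn hs0, ha.2]
  have hle : distφ φ K y ≤ s * d := by
    rw [← hphiya]; exact dist_le_phi hn ha.1
  have hge : s * d ≤ distφ φ K y := by
    apply le_dist hKne
    intro b hb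
    have hzy : z - y = (S - s) • (x - a) := by rw [hz, hy]; module
    have hphizy : φ (z - y) = (S - s) * d := by
      rw [hzy, phi_smul_nonneg hn (by linarith), ha.2]
    have h1 : distφ φ K z ≤ φ (z - y) + φ (y - b) := by
      calc distφ φ K z ≤ φ (z - b) := dist_le_phi hn hb
        _ ≤ φ (z - y) + φ (y - b) := phi_sub_le hn z y b
    rw [hS, hphizy] at h1
    linarith
  have heq : distφ φ K y = s * d := le_antisymm hle hge
  exact ⟨heq, ha.1, by rw [hphiya, heq]⟩

end Aux

namespace Aux

theorem ofReal_le_of_forall_lt {b : ℝ≥0∞} {c : ℝ}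
    (h : ∀ c' : ℝ, 0 < c' → c' < c → ENNReal.ofReal c' ≤ b) : ENNReal.ofReal c ≤ b := by
  rcases le_or_gt c 0 with hc | hc
  · simp [ENNReal.ofReal_eq_zero.mpr hc]
  by_contra hb
  push_neg at hb
  have hbt : b ≠ ⊤ := hb.ne_top
  have hb' : b.toReal < c := by
    have := ENNReal.toReal_lt_toReal hbt ENNReal.ofReal_ne_top |>.mpr hb
    rwa [ENNReal.toReal_ofReal hc.le] at this
  have hb0 : 0 ≤ b.toReal := ENNReal.toReal_nonneg
  set c' := (b.toReal + c) / 2 with hc'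
  have h1 : 0 < c' := by positivity
  have h2 : c' < c := by rw [hc']; linarith
  have h3 : b.toReal < c' := by rw [hc']; linarith
  have := h c' h1 h2
  rw [ENNReal.ofReal_le_iff_le_toReal hbt] at this
  linarith

variable {n : ℕ} {φ : Euc n → ℝ} {K : Set (Euc n)} (hφ : StrictlyConvexNorm φ)

include hφ

theorem unique_near {x a : Euc n} (hx : x ∉ K) (ha : a ∈ nearφ φ K x) {S s : ℝ}
    (hS : distφ φ K (a + S • (x - a)) = S * distφ φ K x)
    (hs0 : 0 < s) (hsS : s < S) :
    nearφ φ K (a + s • (x - a)) = {a} := by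
  have hn := hφ.1
  set d := distφ φ K x with hd
  have hdpos : 0 < d := dist_pos hn hx ha
  obtain ⟨hdy, hay⟩ := seg_lemma hn ha hS hs0.le hsS.le
  set y := a + s • (x - a) with hy
  set z := a + S • (x - a) with hz
  apply Set.eq_singleton_iff_unique_mem.mpr
  refine ⟨hay, fun b hb => ?_⟩
  have hbK : b ∈ K := hb.1
  have hphiyb : φ (y - b) = s * d := by rw [hb.2, hdy]
  set u := z - y with hu
  set v := y - b with hv
  have hzy : z - y = (S - s) • (x - a) := by rw [hz, hy]; module
  have hphiu : φ u = (S - s) * d := by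
    rw [hu, hzy, phi_smul_nonneg hn (by linarith), ha.2]
  have huv : u + v = z - b := by rw [hu, hv]; abel
  have heq : φ (u + v) = φ u + φ v := by
    apply le_antisymm (hn.2.2 u v)
    rw [huv, hphiu, hv, hphiyb]
    calc (S - s) * d + s * d = S * d := by ring
      _ = distφ φ K z := hS.symm
      _ ≤ φ (z - b) := dist_le_phi hn hbK
  have hsc := hφ.2 u v heq
  rw [hphiu, hv, hphiyb] at hsc
  -- hsc : (s * d) • u = ((S - s) * d) • (y - b)
  have hkey : (y - b) = s • (x - a) := by
    have h1 : (s * d) • u = (s * d) • ((S - s) • (x - a)) := by rw [hu, hzy]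
    have h2 : ((S - s) * d) • (y - b) = (s * d * (S - s)) • (x - a) := by
      rw [← hsc, h1, smul_smul]
    have hne : (S - s) * d ≠ 0 := by
      have : 0 < (S - s) * d := mul_pos (by linarith) hdpos
      exact this.ne'
    have h3 : (y - b) = (((S - s) * d)⁻¹ * (s * d * (S - s))) • (x - a) := by
      rw [mul_smul, ← h2, inv_smul_smul₀ hne]
    rw [h3]
    congr 1
    rw [mul_comm, mul_inv_eq_iff_eq_mul₀ hne]
    ring
  have hba : y - b = y - a := by rw [hkey, hy]; abel
  exact sub_right_inj.mp hba

end Aux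

namespace Aux

variable {n : ℕ} {φ : Euc n → ℝ} {K : Set (Euc n)} (hφ : StrictlyConvexNorm φ)

include hφ

omit hφ in
theorem extract {x a : Euc n} (hnear : nearφ φ K x = {a}) {m : ℝ} (hm : 0 ≤ m)
    (hrx : ENNReal.ofReal m < rhoφ φ K x) :
    ∃ S : ℝ, m < S ∧ distφ φ K (a + S • (x - a)) = S * distφ φ K x := by
  obtain ⟨r, hrmem, hlt⟩ := lt_sSup_iff.mp hrx
  obtain ⟨S, a', ha', hr, hdist⟩ := hrmem
  have ha'a : a' = a := by rw [hnear] at ha'; exact ha'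
  subst ha'a
  rw [hr] at hlt
  have hmS : m < S := by
    by_contra hc
    push_neg at hc
    exact absurd (ENNReal.ofReal_le_ofReal hc) (not_le.mpr hlt)
  exact ⟨S, hmS, hdist⟩

theorem key {τ s : ℝ} (hτ : 1 < τ) (hs0 : 0 < s) (hsτ : s < τ)
    (f : Euc n → Euc n) (hf : ∀ x : Euc n, 1 < rhoφ φ K x → nearφ φ K x = {f x})
    {x : Euc n} (hx : x ∉ K) (hrx : ENNReal.ofReal τ ≤ rhoφ φ K x) :
    (s • x + (1 - s) • f x) ∉ K ∧
      ENNReal.ofReal (τ / s) ≤ rhoφ φ K (s • x + (1 - s) • f x) ∧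
      f (s • x + (1 - s) • f x) = f x := by
  have hn := hφ.1
  have h1τ : (1 : ℝ≥0∞) < ENNReal.ofReal τ := by
    rw [← ENNReal.ofReal_one]
    exact ENNReal.ofReal_lt_ofReal_iff_of_nonneg zero_le_one |>.mpr hτ
  have hrx1 : 1 < rhoφ φ K x := lt_of_lt_of_le h1τ hrx
  have hnear : nearφ φ K x = {f x} := hf x hrx1
  set a := f x with hadef
  have ha : a ∈ nearφ φ K x := by rw [hnear]; exact rfl
  set d := distφ φ K x with hd
  have hdpos : 0 < d := dist_pos hn hx ha
  have hyform : s • x + (1 - s) • a = a + s • (x - a) := by module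
  set y := a + s • (x - a) with hy
  -- extract a witness S₀ > max s 1
  have hm0 : (0:ℝ) ≤ max s 1 := le_trans zero_le_one (le_max_right _ _)
  have hm0τ : ENNReal.ofReal (max s 1) < ENNReal.ofReal τ :=
    (ENNReal.ofReal_lt_ofReal_iff (lt_trans one_pos hτ)).mpr (max_lt hsτ hτ)
  obtain ⟨S₀, hS₀m, hS₀⟩ := extract hnear hm0 (lt_of_lt_of_le hm0τ hrx)
  have hsS₀ : s < S₀ := lt_of_le_of_lt (le_max_left s 1) hS₀m
  obtain ⟨hdy, hay⟩ := seg_lemma hn ha hS₀ hs0.le hsS₀.le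
  have hdy' : distφ φ K y = s * d := hdy
  have hynK : y ∉ K := by
    intro hyK
    have : distφ φ K y ≤ φ (y - y) := dist_le_phi hn hyK
    rw [sub_self, phi_zero hn] at this
    nlinarith
  have hneary : nearφ φ K y = {a} := unique_near hφ hx ha hS₀ hs0 hsS₀
  have hrhoy : ENNReal.ofReal (τ / s) ≤ rhoφ φ K y := by
    apply ofReal_le_of_forall_lt
    intro r hr0 hrτ
    have hrs : r * s < τ := (lt_div_iff₀ hs0).mp hrτ
    set m := max (max (r * s) s) 1 with hmdef
    have hm1 : (0:ℝ) ≤ m := le_trans zero_le_one (le_max_right _ _)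
    have hmτ : m < τ := max_lt (max_lt hrs hsτ) hτ
    have hmlt : ENNReal.ofReal m < ENNReal.ofReal τ :=
      (ENNReal.ofReal_lt_ofReal_iff (lt_trans one_pos hτ)).mpr hmτ
    obtain ⟨S, hSm, hS⟩ := extract hnear hm1 (lt_of_lt_of_le hmlt hrx)
    have hsS : s ≤ S := le_of_lt (lt_of_le_of_lt (le_trans (le_max_right _ _) (le_max_left _ _)) hSm)
    have harg : a + (S / s) • (y - a) = a + S • (x - a) := by
      have : y - a = s • (x - a) := by rw [hy]; module
      rw [this, smul_smul, div_mul_cancel₀ _ hs0.ne']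
    have hSdist : distφ φ K (a + (S / s) • (y - a)) = (S / s) * distφ φ K y := by
      rw [harg, hS, hdy']
      field_simp
      ring
    have hmem : ENNReal.ofReal (S / s) ∈
        {r : ℝ≥0∞ | ∃ s' : ℝ, ∃ a' ∈ nearφ φ K y,
          r = ENNReal.ofReal s' ∧ distφ φ K (a' + s' • (y - a')) = s' * distφ φ K y} :=
      ⟨S / s, a, hay, rfl, hSdist⟩
    have hle := le_sSup hmem
    have hrS : r ≤ S / s := by
      rw [le_div_iff₀ hs0]
      have : r * s ≤ max (max (r * s) s) 1 := le_trans (le_max_left _ _) (le_max_left _ _)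
      linarith [hSm]
    calc ENNReal.ofReal r ≤ ENNReal.ofReal (S / s) := ENNReal.ofReal_le_ofReal hrS
      _ ≤ rhoφ φ K y := hle
  refine ⟨hyform ▸ hynK, hyform ▸ hrhoy, ?_⟩
  have hry1 : 1 < rhoφ φ K y := by
    apply lt_of_lt_of_le _ hrhoy
    rw [← ENNReal.ofReal_one]
    apply ENNReal.ofReal_lt_ofReal_iff_of_nonneg zero_le_one |>.mpr
    rw [lt_div_iff₀ hs0]
    linarith
  have := hf y hry1
  rw [hneary] at this
  have hfy : f y = a := (Set.singleton_eq_singleton_iff.mp this).symm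
  rw [hyform]
  exact hfy

end Aux

namespace Aux

variable {n : ℕ} {φ : Euc n → ℝ} {K : Set (Euc n)} (hφ : StrictlyConvexNorm φ)

include hφ

theorem f_contOn (hK : IsClosed K)
    (f : Euc n → Euc n) (hf : ∀ x : Euc n, 1 < rhoφ φ K x → nearφ φ K x = {f x})
    {τ : ℝ} (hτ : 1 < τ) :
    ContinuousOn f {x | x ∉ K ∧ ENNReal.ofReal τ ≤ rhoφ φ K x} := by
  classical
  have hn := hφ.1
  set S : Set (Euc n) := {x | x ∉ K ∧ ENNReal.ofReal τ ≤ rhoφ φ K x} with hSdef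
  have hrho1 : ∀ x ∈ S, 1 < rhoφ φ K x := by
    intro x hx
    refine lt_of_lt_of_le ?_ hx.2
    rw [← ENNReal.ofReal_one]
    exact ENNReal.ofReal_lt_ofReal_iff_of_nonneg zero_le_one |>.mpr hτ
  have hmemnear : ∀ x ∈ S, f x ∈ nearφ φ K x := by
    intro x hx
    rw [hf x (hrho1 x hx)]; exact rfl
  intro x₀ hx₀
  have ha₀ := hmemnear x₀ hx₀
  have hKne : K.Nonempty := ⟨f x₀, ha₀.1⟩
  obtain ⟨C, hC0, hC⟩ := phi_upper hn
  obtain ⟨c, hc0, hc⟩ := phi_lower hn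
  rw [ContinuousWithinAt]
  apply tendsto_iff_seq_tendsto.mpr
  intro u hu
  have hu1 : Tendsto u atTop (𝓝 x₀) := hu.mono_right nhdsWithin_le_nhds
  have hu2 : ∀ᶠ k in atTop, u k ∈ S := hu self_mem_nhdsWithin
  set u' : ℕ → Euc n := fun k => if u k ∈ S then u k else x₀ with hu'def
  have hu'S : ∀ k, u' k ∈ S := by
    intro k; rw [hu'def]; dsimp only
    split
    · assumption
    · exact hx₀
  have hu'eq : u' =ᶠ[atTop] u := hu2.mono fun k hk => by rw [hu'def]; exact if_pos hk
  have hu'1 : Tendsto u' atTop (𝓝 x₀) := hu1.congr' hu'eq.symm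
  have hgoal : Tendsto (fun k => f (u' k)) atTop (𝓝 (f x₀)) → Tendsto (f ∘ u) atTop (𝓝 (f x₀)) := by
    intro hg
    exact hg.congr' (hu'eq.mono fun k hk => by simp [hk])
  apply hgoal
  -- boundedness
  have hnrm : Tendsto (fun k => ‖u' k - x₀‖) atTop (𝓝 0) := by
    have h1 : Tendsto (fun k => u' k - x₀) atTop (𝓝 0) := by
      rw [← sub_self x₀]
      exact hu'1.sub tendsto_const_nhds
    simpa using h1.norm
  obtain ⟨M₁, hM₁⟩ := hnrm.bddAbove_range
  have hM₁' : ∀ k, ‖u' k - x₀‖ ≤ M₁ := fun k => hM₁ ⟨k, rfl⟩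
  have hM₁0 : 0 ≤ M₁ := le_trans (norm_nonneg _) (hM₁' 0)
  set M : ℝ := C * (M₁ + ‖x₀ - f x₀‖) / c + M₁ with hM
  have hball : ∀ k, f (u' k) ∈ closedBall x₀ M := by
    intro k
    have hk := hmemnear _ (hu'S k)
    have h1 : φ (u' k - f (u' k)) = distφ φ K (u' k) := hk.2
    have h2 : distφ φ K (u' k) ≤ φ (u' k - f x₀) := dist_le_phi hn ha₀.1
    have h3 : φ (u' k - f x₀) ≤ C * ‖u' k - f x₀‖ := hC _
    have h4 : ‖u' k - f x₀‖ ≤ M₁ + ‖x₀ - f x₀‖ := by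
      calc ‖u' k - f x₀‖ = ‖(u' k - x₀) + (x₀ - f x₀)‖ := by congr 1; abel
        _ ≤ ‖u' k - x₀‖ + ‖x₀ - f x₀‖ := norm_add_le _ _
        _ ≤ M₁ + ‖x₀ - f x₀‖ := by linarith [hM₁' k]
    have h5 : c * ‖u' k - f (u' k)‖ ≤ φ (u' k - f (u' k)) := hc _
    have h6 : ‖u' k - f (u' k)‖ ≤ C * (M₁ + ‖x₀ - f x₀‖) / c := by
      rw [le_div_iff₀ hc0]
      have : C * ‖u' k - f x₀‖ ≤ C * (M₁ + ‖x₀ - f x₀‖) :=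
        mul_le_mul_of_nonneg_left h4 hC0
      nlinarith
    rw [mem_closedBall, dist_eq_norm]
    calc ‖f (u' k) - x₀‖ = ‖-(u' k - f (u' k)) + (u' k - x₀)‖ := by congr 1; abel
      _ ≤ ‖u' k - f (u' k)‖ + ‖u' k - x₀‖ := by
          refine le_trans (norm_add_le _ _) ?_
          rw [norm_neg]
      _ ≤ M := by rw [hM]; linarith [hM₁' k]
  -- subsequence argument
  apply tendsto_of_subseq_tendsto
  intro ns hns
  obtain ⟨b, hbball, ψ, hψmono, hψtendsto⟩ :=
    (isCompact_closedBall x₀ M).tendsto_subseq (x := fun k => f (u' (ns k))) (fun k => hball (ns k))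
  refine ⟨ψ, ?_⟩
  have hw : Tendsto (fun k => u' (ns (ψ k))) atTop (𝓝 x₀) :=
    hu'1.comp (hns.comp hψmono.tendsto_atTop)
  have hbK : b ∈ K := hK.mem_of_tendsto hψtendsto
    (Filter.Eventually.of_forall fun k => (hmemnear _ (hu'S (ns (ψ k)))).1)
  have hphi : φ (x₀ - b) = distφ φ K x₀ := by
    have t1 : Tendsto (fun k => φ (u' (ns (ψ k)) - f (u' (ns (ψ k))))) atTop (𝓝 (φ (x₀ - b))) := by
      have : Tendsto (fun k => u' (ns (ψ k)) - f (u' (ns (ψ k)))) atTop (𝓝 (x₀ - b)) :=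
        hw.sub hψtendsto
      exact ((phi_continuous hn).tendsto _).comp this
    have t2 : Tendsto (fun k => φ (u' (ns (ψ k)) - f (u' (ns (ψ k))))) atTop
        (𝓝 (distφ φ K x₀)) := by
      have heq : (fun k => φ (u' (ns (ψ k)) - f (u' (ns (ψ k))))) =
          fun k => distφ φ K (u' (ns (ψ k))) := by
        funext k
        exact (hmemnear _ (hu'S (ns (ψ k)))).2
      rw [heq]
      exact ((dist_continuous hn hKne).tendsto _).comp hw
    exact tendsto_nhds_unique t1 t2
  have hbnear : b ∈ nearφ φ K x₀ := ⟨hbK, hphi⟩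
  have : b = f x₀ := by
    rw [hf x₀ (hrho1 x₀ hx₀)] at hbnear
    exact hbnear
  rw [← this]
  exact hψtendsto

end Aux

end AuxSection

theorem stmt8 {n : ℕ} (φ : Euc n → ℝ) (hφ : StrictlyConvexNorm φ) (K : Set (Euc n))
    (hK : IsClosed K) (σ : ℝ) (hσ : 1 < σ)
    (f : Euc n → Euc n) (hf : ∀ x : Euc n, 1 < rhoφ φ K x → nearφ φ K x = {f x})
    (h : ℝ → Euc n → Euc n) (hh : ∀ (t : ℝ) (y : Euc n), h t y = t • y + (1 - t) • f y)
    (Kσ : ℝ → Set (Euc n))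
    (hKσ : ∀ s : ℝ, Kσ s = {x | x ∉ K ∧ ENNReal.ofReal s ≤ rhoφ φ K x}) :
    ∀ t : ℝ, 0 < t → t < σ →
      Set.BijOn (h t) (Kσ σ) (Kσ (σ / t)) ∧
      ContinuousOn (h t) (Kσ σ) ∧
      ContinuousOn (h (1 / t)) (Kσ (σ / t)) ∧
      (∀ x ∈ Kσ σ, h (1 / t) (h t x) = x) ∧
      (∀ y ∈ Kσ (σ / t), h t (h (1 / t) y) = y) := by
  intro t ht0 htσ
  have hτ' : (1:ℝ) < σ / t := (one_lt_div ht0).mpr htσ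
  have hs'0 : (0:ℝ) < 1 / t := by positivity
  have hs'τ : 1 / t < σ / t := by gcongr
  have hdiv : (σ / t) / (1 / t) = σ := by field_simp
  have key1 : ∀ x ∈ Kσ σ, (h t x ∉ K ∧
      ENNReal.ofReal (σ / t) ≤ rhoφ φ K (h t x) ∧ f (h t x) = f x) := by
    intro x hx
    rw [hKσ] at hx
    have := Aux.key hφ hσ ht0 htσ f hf hx.1 hx.2
    rwa [← hh t x] at this
  have key2 : ∀ y ∈ Kσ (σ / t), (h (1 / t) y ∉ K ∧
      ENNReal.ofReal σ ≤ rhoφ φ K (h (1 / t) y) ∧ f (h (1 / t) y) = f y) := by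
    intro y hy
    rw [hKσ] at hy
    have := Aux.key hφ hτ' hs'0 hs'τ f hf hy.1 hy.2
    rw [← hh (1 / t) y, hdiv] at this
    exact this
  have maps1 : Set.MapsTo (h t) (Kσ σ) (Kσ (σ / t)) := by
    intro x hx
    obtain ⟨h1, h2, _⟩ := key1 x hx
    rw [hKσ]
    exact ⟨h1, h2⟩
  have maps2 : Set.MapsTo (h (1 / t)) (Kσ (σ / t)) (Kσ σ) := by
    intro y hy
    obtain ⟨h1, h2, _⟩ := key2 y hy
    rw [hKσ]
    exact ⟨h1, h2⟩
  have leftinv : ∀ x ∈ Kσ σ, h (1 / t) (h t x) = x := by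
    intro x hx
    have hfx := (key1 x hx).2.2
    rw [hh (1 / t) (h t x), hfx, hh t x]
    match_scalars <;> field_simp <;> ring
  have rightinv : ∀ y ∈ Kσ (σ / t), h t (h (1 / t) y) = y := by
    intro y hy
    have hfy := (key2 y hy).2.2
    rw [hh t (h (1 / t) y), hfy, hh (1 / t) y]
    match_scalars <;> field_simp <;> ring
  have hcf1 : ContinuousOn f (Kσ σ) := by
    rw [hKσ]; exact Aux.f_contOn hφ hK f hf hσ
  have hcf2 : ContinuousOn f (Kσ (σ / t)) := by
    rw [hKσ]; exact Aux.f_contOn hφ hK f hf hτ'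
  have hcont1 : ContinuousOn (h t) (Kσ σ) := by
    apply ContinuousOn.congr
      (f := fun y : Euc n => t • y + (1 - t) • f y)
      ((continuousOn_id.const_smul t).add (hcf1.const_smul (1 - t)))
    intro y _
    exact hh t y
  have hcont2 : ContinuousOn (h (1 / t)) (Kσ (σ / t)) := by
    apply ContinuousOn.congr
      (f := fun y : Euc n => (1 / t) • y + (1 - 1 / t) • f y)
      ((continuousOn_id.const_smul (1 / t)).add (hcf2.const_smul (1 - 1 / t)))
    intro y _
    exact hh (1 / t) y
  refine ⟨Set.InvOn.bijOn ⟨leftinv, rightinv⟩ maps1 maps2, hcont1, hcont2, leftinv, rightinv⟩
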